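/- Let C be a monoidal category with coequalizers in which tensoring on either side preserves coequalizers. Let f : A ⟶ B be a morphism of monoid objects in C; regard B as a (B,A)-bimodule object and as an (A,B)-bimodule object by restricting its regular actions along f, and form the relative tensor product B ⊗_A B (the coequalizer of the two canonical maps (B ⊗ A) ⊗ B ⇉ B ⊗ B given by the right action of A on the first factor and the left action of A on the second factor; Mathlib `Bimod.tensorBimod`). Let m : B ⊗_A B ⟶ B be the canonical morphism of B-bimodule objects induced by the multiplication of B. If m is an isomorphism and A is separable, then B is separable. -/

import Mathlib

open CategoryTheory MonoidalCategory Limits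
open scoped MonObj

/-- A monoid object `A` in a monoidal category is *separable* if its multiplication
`μ : A ⊗ A ⟶ A` admits a section `σ : A ⟶ A ⊗ A` which is a morphism of
`A`-bimodule objects from `A` to the free bimodule `A ⊗ A`. -/
def Mon_.IsSeparable {C : Type*} [Category C] [MonoidalCategory C] (A : Mon C) : Prop :=
  ∃ σ : A.X ⟶ A.X ⊗ A.X,
    σ ≫ μ[A.X] = 𝟙 A.X ∧
    μ[A.X] ≫ σ = (A.X ◁ σ) ≫ (α_ A.X A.X A.X).inv ≫ (μ[A.X] ▷ A.X) ∧
    μ[A.X] ≫ σ = (σ ▷ A.X) ≫ (α_ A.X A.X A.X).hom ≫ (A.X ◁ μ[A.X])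

variable {C : Type*} [Category C] [MonoidalCategory C]

/-- Given a morphism of monoid objects `f : A ⟶ B`, the monoid `B` regarded as a
`(B, A)`-bimodule object, via its regular left action and via restricting its regular
right action along `f`. -/
@[simps]
def restrictRightRegular {A B : Mon C} (f : A ⟶ B) : Bimod B A where
  X := B.X
  actLeft := μ[B.X]
  actRight := (B.X ◁ f.hom) ≫ μ[B.X]
  actRight_one := by
    rw [← MonoidalCategory.whiskerLeft_comp_assoc, IsMonHom.one_hom, MonObj.mul_one]
  right_assoc := by
    rw [← MonoidalCategory.whiskerLeft_comp_assoc, IsMonHom.mul_hom,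
      MonoidalCategory.whiskerLeft_comp_assoc, MonoidalCategory.tensorHom_def]
    simp only [comp_whiskerRight, Category.assoc, MonObj.mul_assoc_flip,
      MonoidalCategory.whiskerLeft_comp, associator_inv_naturality_right_assoc,
      associator_inv_naturality_middle_assoc, whisker_exchange_assoc]
  middle_assoc := by
    rw [← whisker_exchange_assoc]
    simp only [MonoidalCategory.whiskerLeft_comp, Category.assoc, MonObj.mul_assoc,
      associator_naturality_right_assoc]

/-- Given a morphism of monoid objects `f : A ⟶ B`, the monoid `B` regarded as an
`(A, B)`-bimodule object, via restricting its regular left action along `f` and via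
its regular right action. -/
@[simps]
def restrictLeftRegular {A B : Mon C} (f : A ⟶ B) : Bimod A B where
  X := B.X
  actLeft := (f.hom ▷ B.X) ≫ μ[B.X]
  actRight := μ[B.X]
  one_actLeft := by
    rw [← comp_whiskerRight_assoc, IsMonHom.one_hom, MonObj.one_mul]
  left_assoc := by
    rw [← comp_whiskerRight_assoc, IsMonHom.mul_hom, comp_whiskerRight_assoc, tensorHom_def']
    simp only [comp_whiskerRight, Category.assoc, MonObj.mul_assoc,
      MonoidalCategory.whiskerLeft_comp, associator_naturality_left_assoc,
      associator_naturality_middle_assoc, whisker_exchange_assoc]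
  middle_assoc := by
    simp only [comp_whiskerRight, Category.assoc, MonObj.mul_assoc,
      associator_naturality_left_assoc, ← whisker_exchange_assoc]

/-- The multiplication of `B` coequalizes the two maps whose coequalizer is `B ⊗_A B`. -/
theorem mul_coeq {A B : Mon C} (f : A ⟶ B) :
    ((restrictRightRegular f).actRight ▷ (restrictLeftRegular f).X) ≫ μ[B.X] =
      ((α_ _ _ _).hom ≫
        ((restrictRightRegular f).X ◁ (restrictLeftRegular f).actLeft)) ≫ μ[B.X] := by
  change ((B.X ◁ f.hom ≫ μ[B.X]) ▷ B.X) ≫ μ[B.X] =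
    ((α_ B.X A.X B.X).hom ≫ (B.X ◁ (f.hom ▷ B.X ≫ μ[B.X]))) ≫ μ[B.X]
  simp only [restrictRightRegular_actRight, restrictLeftRegular_X, restrictRightRegular_X,
    restrictLeftRegular_actLeft, comp_whiskerRight, Category.assoc, MonObj.mul_assoc,
    MonoidalCategory.whiskerLeft_comp, associator_naturality_middle_assoc]

namespace SepAux

variable (M : Mon C)

/-- "b ↦ e₁ ⊗ e₂ b" -/
def gl (e : 𝟙_ C ⟶ M.X ⊗ M.X) : M.X ⟶ M.X ⊗ M.X :=
  (λ_ M.X).inv ≫ (e ▷ M.X) ≫ (α_ _ _ _).hom ≫ (M.X ◁ μ[M.X])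

/-- "b ↦ b e₁ ⊗ e₂" -/
def gr (e : 𝟙_ C ⟶ M.X ⊗ M.X) : M.X ⟶ M.X ⊗ M.X :=
  (ρ_ M.X).inv ≫ (M.X ◁ e) ≫ (α_ _ _ _).inv ≫ (μ[M.X] ▷ M.X)

/-- "b ⊗ b' ↦ b e₁ ⊗ e₂ b'" -/
def psi (e : 𝟙_ C ⟶ M.X ⊗ M.X) : M.X ⊗ M.X ⟶ M.X ⊗ M.X :=
  (M.X ◁ gl M e) ≫ (α_ _ _ _).inv ≫ (μ[M.X] ▷ M.X)

variable (e : 𝟙_ C ⟶ M.X ⊗ M.X)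


theorem psi_def : psi M e = (M.X ◁ gl M e) ≫ (α_ _ _ _).inv ≫ (μ[M.X] ▷ M.X) := rfl

theorem psi_eq : psi M e = (gr M e ▷ M.X) ≫ (α_ _ _ _).hom ≫ (M.X ◁ μ[M.X]) := by
  dsimp only [psi, gl, gr]
  simp only [MonoidalCategory.whiskerLeft_comp, comp_whiskerRight, Category.assoc]
  slice_lhs 4 5 => rw [associator_inv_naturality_right]
  slice_lhs 5 6 => rw [whisker_exchange]
  slice_rhs 4 5 => rw [associator_naturality_left]
  monoidal

theorem mul_gl : μ[M.X] ≫ gl M e = (gl M e ▷ M.X) ≫ (α_ _ _ _).hom ≫ (M.X ◁ μ[M.X]) := by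
  dsimp only [gl]
  simp only [MonoidalCategory.whiskerLeft_comp, comp_whiskerRight, Category.assoc]
  slice_rhs 4 5 => rw [associator_naturality_middle]
  slice_rhs 5 6 => rw [← MonoidalCategory.whiskerLeft_comp, MonObj.mul_assoc,
    MonoidalCategory.whiskerLeft_comp, MonoidalCategory.whiskerLeft_comp]
  slice_lhs 1 2 => rw [leftUnitor_inv_naturality]
  slice_lhs 2 3 => rw [whisker_exchange]
  slice_lhs 3 4 => rw [associator_naturality_right]
  monoidal

theorem mul_gr : μ[M.X] ≫ gr M e = (M.X ◁ gr M e) ≫ (α_ _ _ _).inv ≫ (μ[M.X] ▷ M.X) := by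
  dsimp only [gr]
  simp only [MonoidalCategory.whiskerLeft_comp, comp_whiskerRight, Category.assoc]
  slice_rhs 4 5 => rw [associator_inv_naturality_middle]
  slice_rhs 5 6 => rw [← comp_whiskerRight, MonObj.mul_assoc_flip,
    comp_whiskerRight, comp_whiskerRight]
  slice_lhs 1 2 => rw [rightUnitor_inv_naturality]
  slice_lhs 2 3 => rw [← whisker_exchange]
  slice_lhs 3 4 => rw [associator_inv_naturality_left]
  monoidal

theorem gl_mul (he : e ≫ μ[M.X] = η[M.X]) : gl M e ≫ μ[M.X] = 𝟙 M.X := by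
  dsimp only [gl]
  slice_lhs 3 5 => rw [← MonObj.mul_assoc]
  slice_lhs 2 3 => rw [← comp_whiskerRight, he]
  rw [MonObj.one_mul, Iso.inv_hom_id]

theorem psi_mul (he : e ≫ μ[M.X] = η[M.X]) : psi M e ≫ μ[M.X] = μ[M.X] := by
  dsimp only [psi]
  slice_lhs 2 4 => rw [← MonObj.mul_assoc_flip]
  slice_lhs 1 2 => rw [← MonoidalCategory.whiskerLeft_comp, gl_mul M e he]
  simp

theorem unit_psi_l : (λ_ M.X).inv ≫ (η[M.X] ▷ M.X) ≫ psi M e = gl M e := by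
  dsimp only [psi]
  slice_lhs 2 3 => rw [← whisker_exchange]
  slice_lhs 3 4 => rw [associator_inv_naturality_left]
  slice_lhs 4 5 => rw [← comp_whiskerRight, MonObj.one_mul]
  slice_lhs 1 2 => rw [← leftUnitor_inv_naturality]
  monoidal

theorem unit_psi_r : (ρ_ M.X).inv ≫ (M.X ◁ η[M.X]) ≫ psi M e = gr M e := by
  rw [psi_eq]
  slice_lhs 2 3 => rw [whisker_exchange]
  slice_lhs 3 4 => rw [associator_naturality_right]
  slice_lhs 4 5 => rw [← MonoidalCategory.whiskerLeft_comp, MonObj.mul_one]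
  slice_lhs 1 2 => rw [← rightUnitor_inv_naturality]
  monoidal

theorem g3sub {N : C} (h : N ⟶ M.X) :
    ((h ≫ gr M e) ▷ M.X) ≫ (α_ _ _ _).hom ≫ (M.X ◁ μ[M.X]) =
      (N ◁ gl M e) ≫ (h ▷ (M.X ⊗ M.X)) ≫ (α_ _ _ _).inv ≫ (μ[M.X] ▷ M.X) := by
  rw [comp_whiskerRight, Category.assoc, ← psi_eq]
  dsimp only [psi]
  rw [whisker_exchange_assoc]

theorem gr_hom {A B : Mon C} (f : A ⟶ B) (e : 𝟙_ C ⟶ A.X ⊗ A.X) :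
    gr A e ≫ (f.hom ⊗ₘ f.hom) = f.hom ≫ gr B (e ≫ (f.hom ⊗ₘ f.hom)) := by
  dsimp only [gr]
  rw [tensorHom_def']
  simp only [comp_whiskerRight, MonoidalCategory.whiskerLeft_comp, Category.assoc]
  slice_lhs 4 5 => rw [← whisker_exchange]
  slice_lhs 5 6 => rw [← comp_whiskerRight, IsMonHom.mul_hom, tensorHom_def']
  simp only [comp_whiskerRight, Category.assoc]
  slice_lhs 3 4 => rw [← associator_inv_naturality_right]
  slice_lhs 4 5 => rw [← associator_inv_naturality_middle]
  slice_lhs 5 6 => rw [← associator_inv_naturality_left]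
  slice_rhs 1 2 => rw [rightUnitor_inv_naturality]
  slice_rhs 2 3 => rw [← whisker_exchange]
  slice_rhs 3 4 => rw [← whisker_exchange]
  slice_rhs 4 5 => rw [← whisker_exchange]
  monoidal

theorem sig_l (σ : M.X ⟶ M.X ⊗ M.X)
    (hσ : μ[M.X] ≫ σ = (σ ▷ M.X) ≫ (α_ M.X M.X M.X).hom ≫ (M.X ◁ μ[M.X])) :
    σ = gl M (η[M.X] ≫ σ) := by
  conv_lhs => rw [← Category.id_comp σ, ← Iso.inv_hom_id (λ_ M.X), Category.assoc,
    ← MonObj.one_mul M.X, Category.assoc, hσ]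
  dsimp only [gl]
  rw [comp_whiskerRight_assoc]

theorem sig_r (σ : M.X ⟶ M.X ⊗ M.X)
    (hσ : μ[M.X] ≫ σ = (M.X ◁ σ) ≫ (α_ M.X M.X M.X).inv ≫ (μ[M.X] ▷ M.X)) :
    σ = gr M (η[M.X] ≫ σ) := by
  conv_lhs => rw [← Category.id_comp σ, ← Iso.inv_hom_id (ρ_ M.X), Category.assoc,
    ← MonObj.mul_one M.X, Category.assoc, hσ]
  dsimp only [gr]
  rw [MonoidalCategory.whiskerLeft_comp_assoc]

theorem coeq_cond {A B : Mon C} (f : A ⟶ B) (e : 𝟙_ C ⟶ B.X ⊗ B.X)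
    (hfg : f.hom ≫ gl B e = f.hom ≫ gr B e) :
    (((B.X ◁ f.hom) ≫ μ[B.X]) ▷ B.X) ≫ psi B e =
      ((α_ B.X A.X B.X).hom ≫ (B.X ◁ ((f.hom ▷ B.X) ≫ μ[B.X]))) ≫ psi B e := by
  have G3 : ((f.hom ▷ B.X) ≫ μ[B.X]) ≫ gl B e =
      (A.X ◁ gl B e) ≫ (f.hom ▷ (B.X ⊗ B.X)) ≫ (α_ _ _ _).inv ≫ (μ[B.X] ▷ B.X) := by
    rw [Category.assoc, mul_gl]
    slice_lhs 1 2 => rw [← comp_whiskerRight, hfg]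
    simp only [Category.assoc]
    exact g3sub B e f.hom
  dsimp only [psi]
  slice_lhs 1 2 => rw [← whisker_exchange]
  slice_rhs 2 3 => rw [← MonoidalCategory.whiskerLeft_comp, G3]
  simp only [MonoidalCategory.whiskerLeft_comp, comp_whiskerRight, Category.assoc]
  slice_lhs 3 4 => rw [associator_inv_naturality_left]
  slice_rhs 5 6 => rw [associator_inv_naturality_middle]
  slice_rhs 6 7 => rw [← comp_whiskerRight, MonObj.mul_assoc_flip,
    comp_whiskerRight, comp_whiskerRight]
  monoidal


theorem gl_hom {A B : Mon C} (f : A ⟶ B) (e : 𝟙_ C ⟶ A.X ⊗ A.X) :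
    gl A e ≫ (f.hom ⊗ₘ f.hom) = f.hom ≫ gl B (e ≫ (f.hom ⊗ₘ f.hom)) := by
  dsimp only [gl]
  rw [MonoidalCategory.tensorHom_def]
  simp only [comp_whiskerRight, MonoidalCategory.whiskerLeft_comp, Category.assoc]
  slice_lhs 4 5 => rw [whisker_exchange]
  slice_lhs 5 6 => rw [← MonoidalCategory.whiskerLeft_comp, IsMonHom.mul_hom, MonoidalCategory.tensorHom_def]
  simp only [MonoidalCategory.whiskerLeft_comp, Category.assoc]
  slice_lhs 3 4 => rw [← associator_naturality_left]
  slice_lhs 4 5 => rw [← associator_naturality_middle]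
  slice_lhs 5 6 => rw [← associator_naturality_right]
  slice_rhs 1 2 => rw [leftUnitor_inv_naturality]
  slice_rhs 2 3 => rw [whisker_exchange]
  slice_rhs 3 4 => rw [whisker_exchange]
  slice_rhs 4 5 => rw [whisker_exchange]
  monoidal

end SepAux

/-- If `f : A ⟶ B` is a morphism of monoid objects such that the canonical morphism of
`B`-bimodule objects `B ⊗_A B ⟶ B` induced by the multiplication of `B` is an
isomorphism, and `A` is separable, then `B` is separable. -/

theorem Mon_.IsSeparable.of_isIso_desc_mul
    [HasCoequalizers C]
    [∀ X : C, PreservesColimitsOfSize.{0, 0} (tensorLeft X)]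
    [∀ X : C, PreservesColimitsOfSize.{0, 0} (tensorRight X)]
    {A B : Mon C} (f : A ⟶ B)
    (hm : IsIso (coequalizer.desc μ[B.X] (mul_coeq f) :
      ((restrictRightRegular f).tensorBimod (restrictLeftRegular f)).X ⟶ B.X))
    (hA : Mon_.IsSeparable A) : Mon_.IsSeparable B := by
  obtain ⟨σ, h1, h2, h3⟩ := hA
  haveI := hm
  set m : ((restrictRightRegular f).tensorBimod (restrictLeftRegular f)).X ⟶ B.X :=
    coequalizer.desc μ[B.X] (mul_coeq f) with hm_def
  set e : 𝟙_ C ⟶ B.X ⊗ B.X := (η[A.X] ≫ σ) ≫ (f.hom ⊗ₘ f.hom) with he_def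
  have he1 : e ≫ μ[B.X] = η[B.X] := by
    rw [he_def, Category.assoc, ← IsMonHom.mul_hom, Category.assoc, ← Category.assoc σ, h1,
      Category.id_comp, IsMonHom.one_hom]
  have hfg : f.hom ≫ SepAux.gl B e = f.hom ≫ SepAux.gr B e := by
    rw [he_def, ← SepAux.gl_hom, ← SepAux.gr_hom, ← SepAux.sig_l A σ h3, ← SepAux.sig_r A σ h2]
  have hcoeq : ((restrictRightRegular f).actRight ▷ (restrictLeftRegular f).X) ≫ SepAux.psi B e =
      ((α_ _ _ _).hom ≫
        ((restrictRightRegular f).X ◁ (restrictLeftRegular f).actLeft)) ≫ SepAux.psi B e := by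
    exact SepAux.coeq_cond f e hfg
  set π : B.X ⊗ B.X ⟶ ((restrictRightRegular f).tensorBimod (restrictLeftRegular f)).X :=
    coequalizer.π ((restrictRightRegular f).actRight ▷ (restrictLeftRegular f).X)
      ((α_ _ _ _).hom ≫ ((restrictRightRegular f).X ◁ (restrictLeftRegular f).actLeft))
    with hπ_def
  set φ : ((restrictRightRegular f).tensorBimod (restrictLeftRegular f)).X ⟶ B.X ⊗ B.X :=
    coequalizer.desc (SepAux.psi B e) hcoeq with hφ_def
  have hπm : π ≫ m = μ[B.X] := coequalizer.π_desc _ _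
  have hπφ : π ≫ φ = SepAux.psi B e := coequalizer.π_desc _ _
  have hφm : φ ≫ μ[B.X] = m := by
    apply coequalizer.hom_ext
    change π ≫ φ ≫ μ[B.X] = π ≫ m
    rw [← Category.assoc, hπφ, SepAux.psi_mul B e he1, hπm]
  have hπepi : Epi π := coequalizer.π_epi
  clear_value m π φ
  have hmi : IsIso m := hm
  have hmulinv : μ[B.X] ≫ inv m = π := by
    rw [IsIso.comp_inv_eq, hπm]
  have hglgr : SepAux.gl B e = SepAux.gr B e := by
    have c0 : (λ_ B.X).inv ≫ (η[B.X] ▷ B.X) ≫ π = (ρ_ B.X).inv ≫ (B.X ◁ η[B.X]) ≫ π := by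
      rw [← cancel_mono m]
      simp only [Category.assoc, hπm, MonObj.one_mul, MonObj.mul_one, Iso.inv_hom_id]
    have c1 := congrArg (fun t => t ≫ φ) c0
    simp only [Category.assoc] at c1
    rw [← SepAux.unit_psi_l B e, ← SepAux.unit_psi_r B e, ← hπφ]
    exact c1
  refine ⟨inv m ≫ φ, ?_, ?_, ?_⟩
  · rw [Category.assoc, hφm, IsIso.inv_hom_id]
  · haveI : Epi (B.X ◁ π) := (tensorLeft B.X).map_epi π
    have E2 : (B.X ◁ m) ≫ SepAux.psi B e = (B.X ◁ φ) ≫ (α_ _ _ _).inv ≫ (μ[B.X] ▷ B.X) := by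
      rw [← cancel_epi (B.X ◁ π), ← MonoidalCategory.whiskerLeft_comp_assoc, hπm,
        ← MonoidalCategory.whiskerLeft_comp_assoc, hπφ]
      conv_lhs => rw [SepAux.psi_def]
      rw [← MonoidalCategory.whiskerLeft_comp_assoc, SepAux.mul_gl, hglgr, ← SepAux.psi_eq]
    rw [MonoidalCategory.whiskerLeft_comp, Category.assoc, ← E2,
      ← MonoidalCategory.whiskerLeft_comp_assoc, IsIso.inv_hom_id,
      MonoidalCategory.whiskerLeft_id, Category.id_comp, ← Category.assoc, hmulinv, hπφ]
  · haveI : Epi (π ▷ B.X) := (tensorRight B.X).map_epi π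
    have E3 : (m ▷ B.X) ≫ SepAux.psi B e = (φ ▷ B.X) ≫ (α_ _ _ _).hom ≫ (B.X ◁ μ[B.X]) := by
      rw [← cancel_epi (π ▷ B.X), ← comp_whiskerRight_assoc, hπm,
        ← comp_whiskerRight_assoc, hπφ]
      conv_lhs => rw [SepAux.psi_eq]
      rw [← comp_whiskerRight_assoc, SepAux.mul_gr, ← hglgr, ← SepAux.psi_def]
    rw [comp_whiskerRight, Category.assoc, ← E3,
      ← comp_whiskerRight_assoc, IsIso.inv_hom_id,
      MonoidalCategory.id_whiskerRight, Category.id_comp, ← Category.assoc, hmulinv, hπφ]
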